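/- Pinchuk's map F = (p,q) : ℝ² → ℝ² has everywhere nonvanishing Jacobian determinant (so F is a local diffeomorphism), yet F is not injective, hence F is not a global diffeomorphism of ℝ². -/

import Mathlib

noncomputable section

/-- The Pinchuk auxiliary polynomial `t = xy - 1`. -/
def pT (x y : ℝ) : ℝ := x * y - 1

/-- The Pinchuk auxiliary polynomial `h = t(xt + 1)`. -/
def pH (x y : ℝ) : ℝ := pT x y * (x * pT x y + 1)

/-- The Pinchuk auxiliary polynomial `f = (xt+1)^2 (t^2 + y)`. -/
def pF (x y : ℝ) : ℝ := (x * pT x y + 1) ^ 2 * ((pT x y) ^ 2 + y)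

/-- The Pinchuk polynomial `u(f,h)`. -/
def pU (f h : ℝ) : ℝ :=
  (1/4) * f * (75*f^3 + 300*f^2*h + 450*f*h^2 + 276*f^2 + 828*f*h + 48*h^2 + 364*f + 48*h)

/-- Pinchuk's map `F = (p, q) : ℝ² → ℝ²` with `p = f + h` and
    `q = -t² - 6th(h+1) + u(f,h)`. -/
def pinchuk : ℝ × ℝ → ℝ × ℝ := fun v =>
  (pF v.1 v.2 + pH v.1 v.2,
   -(pT v.1 v.2)^2 - 6 * pT v.1 v.2 * pH v.1 v.2 * (pH v.1 v.2 + 1)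
     + pU (pF v.1 v.2) (pH v.1 v.2))

/-- The parameterization `Φ(s) = (s² + 2s, u(s² + s, s))`. -/
def Phi (s : ℝ) : ℝ × ℝ := (s^2 + 2*s, pU (s^2 + s) s)

/-- A continuous map `g : X → Y` is *not proper at* `y ∈ Y` if there is no
    neighborhood `U` of `y` such that `g ⁻¹(cl U)` is compact. -/
def NotProperAt {X Y : Type*} [TopologicalSpace X] [TopologicalSpace Y]
    (g : X → Y) (y : Y) : Prop :=
  ¬ ∃ U ∈ nhds y, IsCompact (g ⁻¹' closure U)

/-! ### Auxiliary machinery for the Jacobian computation -/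

/-- Partial derivative of `pH` in `x`. -/
def pHx (x y : ℝ) : ℝ := y * (x * pT x y + 1) + pT x y * (2 * pT x y + 1)

/-- Partial derivative of `pH` in `y`. -/
def pHy (x y : ℝ) : ℝ := x * (x * pT x y + 1) + pT x y * x ^ 2

/-- Partial derivative of `pF` in `x`. -/
def pFx (x y : ℝ) : ℝ :=
  2 * (x * pT x y + 1) * (2 * pT x y + 1) * ((pT x y) ^ 2 + y)
    + 2 * pT x y * y * (x * pT x y + 1) ^ 2

/-- Partial derivative of `pF` in `y`. -/
def pFy (x y : ℝ) : ℝ :=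
  2 * (x * pT x y + 1) * x ^ 2 * ((pT x y) ^ 2 + y)
    + (x * pT x y + 1) ^ 2 * (2 * pT x y * x + 1)

/-- Partial derivative of `pU` in its first argument. -/
def pUf (f h : ℝ) : ℝ :=
  (1/4) * (300*f^3 + 900*f^2*h + 900*f*h^2 + 828*f^2 + 1656*f*h + 48*h^2 + 728*f + 48*h)

/-- Partial derivative of `pU` in its second argument. -/
def pUh (f h : ℝ) : ℝ :=
  (1/4) * (300*f^3 + 900*f^2*h + 828*f^2 + 96*f*h + 48*f)

/-- Partial derivative of `q` in `x`. -/
def pQx (x y : ℝ) : ℝ :=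
  -2 * pT x y * y
    - 6 * (y * pH x y * (pH x y + 1) + pT x y * pHx x y * (pH x y + 1)
        + pT x y * pH x y * pHx x y)
    + pUf (pF x y) (pH x y) * pFx x y + pUh (pF x y) (pH x y) * pHx x y

/-- Partial derivative of `q` in `y`. -/
def pQy (x y : ℝ) : ℝ :=
  -2 * pT x y * x
    - 6 * (x * pH x y * (pH x y + 1) + pT x y * pHy x y * (pH x y + 1)
        + pT x y * pH x y * pHy x y)
    + pUf (pF x y) (pH x y) * pFy x y + pUh (pF x y) (pH x y) * pHy x y

/-- The continuous linear form `(u₁, u₂) ↦ a u₁ + b u₂`. -/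
def lin2 (a b : ℝ) : (ℝ × ℝ) →L[ℝ] ℝ :=
  a • ContinuousLinearMap.fst ℝ ℝ ℝ + b • ContinuousLinearMap.snd ℝ ℝ ℝ

@[simp] lemma lin2_apply (a b : ℝ) (u : ℝ × ℝ) : lin2 a b u = a * u.1 + b * u.2 := by
  simp [lin2]

lemma det_lin2 (a b c d : ℝ) :
    LinearMap.det (((lin2 a b).prod (lin2 c d) : (ℝ × ℝ) →L[ℝ] ℝ × ℝ) : (ℝ × ℝ) →ₗ[ℝ] ℝ × ℝ)
      = a * d - b * c := by
  rw [← LinearMap.det_toMatrix (Module.Basis.finTwoProd ℝ), Matrix.det_fin_two]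
  simp [LinearMap.toMatrix_apply, Module.Basis.finTwoProd_zero, Module.Basis.finTwoProd_one,
    Module.Basis.coe_finTwoProd_repr]

lemma hpow2 {g : ℝ × ℝ → ℝ} {g' : (ℝ × ℝ) →L[ℝ] ℝ} {v : ℝ × ℝ}
    (hg : HasFDerivAt g g' v) :
    HasFDerivAt (fun w => g w ^ 2) ((2 * g v) • g') v := by
  have h2 : (fun w => g w ^ 2) = fun w => g w * g w := by funext w; ring
  rw [h2]
  refine (hg.mul hg).congr_fderiv (Eq.symm ?_)
  rw [two_mul, add_smul]

lemma hpow3 {g : ℝ × ℝ → ℝ} {g' : (ℝ × ℝ) →L[ℝ] ℝ} {v : ℝ × ℝ}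
    (hg : HasFDerivAt g g' v) :
    HasFDerivAt (fun w => g w ^ 3) ((3 * g v ^ 2) • g') v := by
  have h2 : (fun w => g w ^ 3) = fun w => g w * (g w * g w) := by funext w; ring
  rw [h2]
  refine (hg.mul (hg.mul hg)).congr_fderiv (Eq.symm ?_)
  refine ContinuousLinearMap.ext fun u => ?_
  simp
  ring

lemma hT (x y : ℝ) : HasFDerivAt (fun v : ℝ × ℝ => pT v.1 v.2) (lin2 y x) (x, y) := by
  have hx : HasFDerivAt (fun v : ℝ × ℝ => v.1) (ContinuousLinearMap.fst ℝ ℝ ℝ) (x, y) :=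
    hasFDerivAt_fst
  have hy : HasFDerivAt (fun v : ℝ × ℝ => v.2) (ContinuousLinearMap.snd ℝ ℝ ℝ) (x, y) :=
    hasFDerivAt_snd
  have h := (hx.mul hy).sub_const (1 : ℝ)
  refine h.congr_fderiv (Eq.symm ?_)
  refine ContinuousLinearMap.ext fun u => ?_
  simp
  ring

lemma hH (x y : ℝ) :
    HasFDerivAt (fun v : ℝ × ℝ => pH v.1 v.2) (lin2 (pHx x y) (pHy x y)) (x, y) := by
  have hx : HasFDerivAt (fun v : ℝ × ℝ => v.1) (ContinuousLinearMap.fst ℝ ℝ ℝ) (x, y) :=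
    hasFDerivAt_fst
  have h := (hT x y).mul ((hx.mul (hT x y)).add_const (1 : ℝ))
  show HasFDerivAt (fun v : ℝ × ℝ => pT v.1 v.2 * (v.1 * pT v.1 v.2 + 1))
    (lin2 (pHx x y) (pHy x y)) (x, y)
  refine h.congr_fderiv (Eq.symm ?_)
  refine ContinuousLinearMap.ext fun u => ?_
  simp [pHx, pHy, pT]
  ring

lemma hF (x y : ℝ) :
    HasFDerivAt (fun v : ℝ × ℝ => pF v.1 v.2) (lin2 (pFx x y) (pFy x y)) (x, y) := by
  have hx : HasFDerivAt (fun v : ℝ × ℝ => v.1) (ContinuousLinearMap.fst ℝ ℝ ℝ) (x, y) :=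
    hasFDerivAt_fst
  have hy : HasFDerivAt (fun v : ℝ × ℝ => v.2) (ContinuousLinearMap.snd ℝ ℝ ℝ) (x, y) :=
    hasFDerivAt_snd
  have hs := (hx.mul (hT x y)).add_const (1 : ℝ)
  have h := (hpow2 hs).mul ((hpow2 (hT x y)).add hy)
  show HasFDerivAt (fun v : ℝ × ℝ => (v.1 * pT v.1 v.2 + 1) ^ 2 * ((pT v.1 v.2) ^ 2 + v.2))
    (lin2 (pFx x y) (pFy x y)) (x, y)
  refine h.congr_fderiv (Eq.symm ?_)
  refine ContinuousLinearMap.ext fun u => ?_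
  simp [pFx, pFy, pT]
  ring

lemma hU (x y : ℝ) :
    HasFDerivAt (fun v : ℝ × ℝ => pU (pF v.1 v.2) (pH v.1 v.2))
      (lin2 (pUf (pF x y) (pH x y) * pFx x y + pUh (pF x y) (pH x y) * pHx x y)
            (pUf (pF x y) (pH x y) * pFy x y + pUh (pF x y) (pH x y) * pHy x y)) (x, y) := by
  have hf := hF x y
  have hh := hH x y
  have hbig := ((((((((hpow3 hf).const_mul (75 : ℝ)).add
      (((hpow2 hf).const_mul (300 : ℝ)).mul hh)).add
      ((hf.const_mul (450 : ℝ)).mul (hpow2 hh))).add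
      ((hpow2 hf).const_mul (276 : ℝ))).add
      ((hf.const_mul (828 : ℝ)).mul hh)).add
      ((hpow2 hh).const_mul (48 : ℝ))).add
      (hf.const_mul (364 : ℝ))).add (hh.const_mul (48 : ℝ))
  have h := (hf.const_mul ((1:ℝ)/4)).mul hbig
  show HasFDerivAt (fun v : ℝ × ℝ => (1/4) * pF v.1 v.2 *
      (75*(pF v.1 v.2)^3 + 300*(pF v.1 v.2)^2*(pH v.1 v.2) + 450*(pF v.1 v.2)*(pH v.1 v.2)^2
        + 276*(pF v.1 v.2)^2 + 828*(pF v.1 v.2)*(pH v.1 v.2) + 48*(pH v.1 v.2)^2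
        + 364*(pF v.1 v.2) + 48*(pH v.1 v.2))) _ (x, y)
  refine h.congr_fderiv (Eq.symm ?_)
  refine ContinuousLinearMap.ext fun u => ?_
  simp [pUf, pUh]
  ring

lemma hPinchuk (x y : ℝ) :
    HasFDerivAt pinchuk
      ((lin2 (pFx x y + pHx x y) (pFy x y + pHy x y)).prod (lin2 (pQx x y) (pQy x y)))
      (x, y) := by
  have hA : HasFDerivAt (fun v : ℝ × ℝ => pF v.1 v.2 + pH v.1 v.2)
      (lin2 (pFx x y + pHx x y) (pFy x y + pHy x y)) (x, y) := by
    refine ((hF x y).add (hH x y)).congr_fderiv (Eq.symm ?_)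
    refine ContinuousLinearMap.ext fun u => ?_
    simp
    ring
  have hB : HasFDerivAt (fun v : ℝ × ℝ =>
      -(pT v.1 v.2)^2 - 6 * pT v.1 v.2 * pH v.1 v.2 * (pH v.1 v.2 + 1)
        + pU (pF v.1 v.2) (pH v.1 v.2)) (lin2 (pQx x y) (pQy x y)) (x, y) := by
    have h := (((hpow2 (hT x y)).neg).sub
        ((((hT x y).const_mul (6 : ℝ)).mul (hH x y)).mul ((hH x y).add_const (1 : ℝ)))).add
        (hU x y)
    refine h.congr_fderiv (Eq.symm ?_)
    refine ContinuousLinearMap.ext fun u => ?_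
    simp [pQx, pQy]
    ring
  exact hA.prodMk hB

/-- The key algebraic identity: the Jacobian determinant equals
`t² + (t + f(13+15h))² + f²`, given the basic Jacobian relations. -/
lemma key_identity (t h f tx ty hx hy fx fy uf uh : ℝ)
    (huf : uf = (1/4) * (300*f^3 + 900*f^2*h + 900*f*h^2 + 828*f^2 + 1656*f*h + 48*h^2
      + 728*f + 48*h))
    (huh : uh = (1/4) * (300*f^3 + 900*f^2*h + 828*f^2 + 96*f*h + 48*f))
    (e1 : tx * hy - ty * hx = t - h)
    (e2 : fx * hy - fy * hx = -f)
    (e3 : tx * fy - ty * fx = f - 2*h - 3*h^2)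
    (e4 : f * (h - t) = h^2 * (h + 1)) :
    (fx + hx) * (-2*t*ty - 6*(ty*h*(h+1) + t*hy*(h+1) + t*h*hy) + uf*fy + uh*hy)
      - (fy + hy) * (-2*t*tx - 6*(tx*h*(h+1) + t*hx*(h+1) + t*h*hx) + uf*fx + uh*hx)
      = t^2 + (t + f*(13 + 15*h))^2 + f^2 := by
  subst huf huh
  linear_combination (2*t + 6*h*(h+1)) * (e3 + e1)
    + (-6*t*(2*h+1)
        - (1/4) * (300*f^3 + 900*f^2*h + 900*f*h^2 + 828*f^2 + 1656*f*h + 48*h^2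
            + 728*f + 48*h)
        + (1/4) * (300*f^3 + 900*f^2*h + 828*f^2 + 96*f*h + 48*f)) * e2
    + 18*(1+h) * e4

/-- Pinchuk's map has everywhere nonvanishing Jacobian determinant (so it is a local
    diffeomorphism), yet it is not injective; hence it is not a global diffeomorphism. -/
theorem pinchuk_jacobian_ne_zero_not_injective :
    (∀ v : ℝ × ℝ, LinearMap.det ((fderiv ℝ pinchuk v) : (ℝ × ℝ) →ₗ[ℝ] (ℝ × ℝ)) ≠ 0) ∧
      ¬ Function.Injective pinchuk := by
  constructor
  · intro v
    obtain ⟨x, y⟩ := v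
    rw [(hPinchuk x y).fderiv, det_lin2]
    have he1 : y * pHy x y - x * pHx x y = pT x y - pH x y := by
      simp only [pHx, pHy, pH, pT]; ring
    have he2 : pFx x y * pHy x y - pFy x y * pHx x y = -pF x y := by
      simp only [pFx, pFy, pHx, pHy, pF, pT]; ring
    have he3 : y * pFy x y - x * pFx x y = pF x y - 2*pH x y - 3*(pH x y)^2 := by
      simp only [pFx, pFy, pF, pH, pT]; ring
    have he4 : pF x y * (pH x y - pT x y) = (pH x y)^2 * (pH x y + 1) := by
      simp only [pF, pH, pT]; ring
    have hkey := key_identity (pT x y) (pH x y) (pF x y) y x (pHx x y) (pHy x y)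
      (pFx x y) (pFy x y) (pUf (pF x y) (pH x y)) (pUh (pF x y) (pH x y))
      (by simp only [pUf]) (by simp only [pUh]) he1 he2 he3 he4
    simp only [pQx, pQy]
    rw [hkey]
    rcases eq_or_ne (pT x y) 0 with h0 | h0
    · have hxy : x * y = 1 := by
        have := h0; simp only [pT] at this; linarith
      have hy0 : y ≠ 0 := by
        rintro rfl; rw [mul_zero] at hxy; exact one_ne_zero hxy.symm
      have hf : pF x y = y := by
        simp [pF, h0]
      intro hE
      rw [h0, hf] at hE
      have hy2 : (0:ℝ) < y^2 := by positivity
      nlinarith [sq_nonneg (0 + y*(13 + 15*pH x y))]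
    · intro hE
      have ht2 : (0:ℝ) < (pT x y)^2 := by positivity
      nlinarith [sq_nonneg (pT x y + pF x y*(13 + 15*pH x y)), sq_nonneg (pF x y)]
  · intro hinj
    have h12 : pinchuk (-2, -1) = pinchuk (0, -1) := by
      simp only [pinchuk, pT, pH, pF, pU]
      norm_num
    have := hinj h12
    rw [Prod.ext_iff] at this
    norm_num at this
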